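/- Let q ≥ 3 be a prime power and identify the alphabet with the finite field F_q. Let M ⊆ F_q^q be a linear MDS code of length q with minimum distance 2, let C0 ⊂ M be a linear MDS code of length q with minimum distance 3, and let C1 = v + C0 be a coset of C0 with v ∈ M \ C0. Then (C0, C1) is a spherical bitrade in the Hamming graph H(q, q) of volume q^{q−2}. -/

import Mathlib

open scoped BigOperators

/-- The ball of radius 1 centered at `x` in a graph `G`. -/
def ball1 {V : Type*} (G : SimpleGraph V) (x : V) : Set V := {y | y = x ∨ G.Adj x y}

/-- A perfect one-error-correcting code: the balls of radius 1 centered at the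
vertices of `C` partition the vertex set. -/
def IsPerfectCode {V : Type*} (G : SimpleGraph V) (C : Set V) : Prop :=
  ∀ x : V, ∃! c, c ∈ C ∧ c ∈ ball1 G x

/-- A perfect bitrade: a pair of disjoint nonempty vertex sets such that every ball of
radius 1 contains exactly one vertex of each, or none of either. -/
def IsPerfectBitrade {V : Type*} (G : SimpleGraph V) (T0 T1 : Set V) : Prop :=
  Disjoint T0 T1 ∧ T0.Nonempty ∧ T1.Nonempty ∧
    ∀ x : V,
      ((∃! y, y ∈ T0 ∧ y ∈ ball1 G x) ∧ (∃! y, y ∈ T1 ∧ y ∈ ball1 G x)) ∨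
        (∀ y, y ∈ T0 ∪ T1 → y ∉ ball1 G x)

/-- A spherical bitrade: a pair of disjoint nonempty vertex sets such that every sphere of
radius 1 contains exactly one vertex of each, or none of either. -/
def IsSphericalBitrade {V : Type*} (G : SimpleGraph V) (S0 S1 : Set V) : Prop :=
  Disjoint S0 S1 ∧ S0.Nonempty ∧ S1.Nonempty ∧
    ∀ x : V,
      ((∃! y, y ∈ S0 ∧ G.Adj x y) ∧ (∃! y, y ∈ S1 ∧ G.Adj x y)) ∨
        (∀ y, y ∈ S0 ∪ S1 → ¬ G.Adj x y)

/-- The Hamming graph `H(n,q)`: vertices are `n`-tuples over an alphabet of size `q`,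
adjacent iff they differ in exactly one coordinate. -/
def hammingGraph (n q : ℕ) : SimpleGraph (Fin n → Fin q) where
  Adj x y := hammingDist x y = 1
  symm := ⟨fun x y (h : hammingDist x y = 1) => show hammingDist y x = 1 by rwa [hammingDist_comm]⟩
  loopless := ⟨fun x (h : hammingDist x x = 1) => by simp [hammingDist_self] at h⟩

/-- `f` is a `μ`-eigenfunction of `G`: `f` is not identically zero and
`μ · f x = ∑_{y ∈ O(x)} f y` for every vertex `x`. -/
def IsEigenfun {V : Type*} (G : SimpleGraph V) (μ : ℝ) (f : V → ℝ) : Prop :=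
  f ≠ 0 ∧ ∀ x : V, μ * f x = ∑ᶠ y ∈ G.neighborSet x, f y

/-- The characteristic function of a set of vertices. -/
noncomputable def chi {V : Type*} (C : Set V) : V → ℝ := Set.indicator C 1

/-- The code `C` has minimum (graph) distance exactly `d`. -/
def HasMinDist {V : Type*} (G : SimpleGraph V) (C : Set V) (d : ℕ) : Prop :=
  (∀ x ∈ C, ∀ y ∈ C, x ≠ y → (d : ℕ∞) ≤ G.edist x y) ∧
    ∃ x ∈ C, ∃ y ∈ C, x ≠ y ∧ G.edist x y = d

/-- The code `C` of `n`-tuples has minimum Hamming distance exactly `d`. -/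
def HasMinHDist {n q : ℕ} (C : Set (Fin n → Fin q)) (d : ℕ) : Prop :=
  (∀ x ∈ C, ∀ y ∈ C, x ≠ y → d ≤ hammingDist x y) ∧
    ∃ x ∈ C, ∃ y ∈ C, x ≠ y ∧ hammingDist x y = d

/-- `G` is distance-regular with intersection numbers `p i j k`. -/
def IsDistRegular {V : Type*} (G : SimpleGraph V) (p : ℕ → ℕ → ℕ → ℕ) : Prop :=
  G.Connected ∧ ∀ (i j k : ℕ) (x y : V), G.edist x y = k →
    {z : V | G.edist x z = i ∧ G.edist z y = j}.ncard = p i j k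

/-- The Hamming graph on `n`-tuples over the alphabet `F`. -/
def hammingGraphF (n : ℕ) (F : Type*) [Fintype F] [DecidableEq F] :
    SimpleGraph (Fin n → F) where
  Adj x y := hammingDist x y = 1
  symm := ⟨fun x y (h : hammingDist x y = 1) => show hammingDist y x = 1 by rwa [hammingDist_comm]⟩
  loopless := ⟨fun x (h : hammingDist x x = 1) => by simp [hammingDist_self] at h⟩

/-- Minimum Hamming distance exactly `d`, for codes over an arbitrary alphabet. -/
def HasMinHDistF {n : ℕ} {F : Type*} [Fintype (Fin n)] [DecidableEq F]
    (C : Set (Fin n → F)) (d : ℕ) : Prop :=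
  (∀ x ∈ C, ∀ y ∈ C, x ≠ y → d ≤ hammingDist x y) ∧
    ∃ x ∈ C, ∃ y ∈ C, x ≠ y ∧ hammingDist x y = d

lemma update_dist {n : ℕ} {F : Type} [Fintype F] [DecidableEq F]
    (c : Fin n → F) (i : Fin n) (b : F) (hb : b ≠ c i) :
    hammingDist c (Function.update c i b) = 1 := by
  unfold hammingDist
  rw [Finset.card_eq_one]
  refine ⟨i, ?_⟩
  ext j
  simp only [Finset.mem_filter, Finset.mem_univ, true_and, Finset.mem_singleton]
  constructor
  · intro h
    by_contra hj
    exact h (by rw [Function.update_of_ne hj])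
  · rintro rfl
    rw [Function.update_self]
    exact fun h => hb h.symm

lemma hdist_one {n : ℕ} {F : Type} [Fintype F] [DecidableEq F]
    {c y : Fin n → F} (h : hammingDist c y = 1) :
    ∃ i b, b ≠ c i ∧ y = Function.update c i b := by
  unfold hammingDist at h
  obtain ⟨i, hi⟩ := Finset.card_eq_one.mp h
  have hmem : ∀ j, (c j ≠ y j) ↔ j = i := by
    intro j
    rw [← Finset.mem_singleton, ← hi]
    simp
  refine ⟨i, y i, fun hb => ((hmem i).mpr rfl) hb.symm, ?_⟩
  funext j
  by_cases hj : j = i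
  · subst hj; simp
  · rw [Function.update_of_ne hj]
    by_contra hne
    exact hj ((hmem j).mp fun e => hne e.symm)

lemma sphere_card {q : ℕ} {F : Type} [Fintype F] [DecidableEq F]
    (hcard : Fintype.card F = q) (c : Fin q → F) :
    (Finset.univ.filter fun y : Fin q → F => hammingDist c y = 1).card = q * (q - 1) := by
  classical
  have hset : (Finset.univ.filter fun y : Fin q → F => hammingDist c y = 1)
      = Finset.univ.biUnion (fun i : Fin q =>
          (Finset.univ.filter fun b : F => b ≠ c i).image (fun b => Function.update c i b)) := by
    ext y
    simp only [Finset.mem_filter, Finset.mem_univ, true_and, Finset.mem_biUnion,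
      Finset.mem_image]
    constructor
    · intro h
      obtain ⟨i, b, hb, rfl⟩ := hdist_one h
      exact ⟨i, b, hb, rfl⟩
    · rintro ⟨i, b, hb, rfl⟩
      exact update_dist c i b hb
  have hdisj : ∀ i ∈ (Finset.univ : Finset (Fin q)), ∀ j ∈ (Finset.univ : Finset (Fin q)),
      i ≠ j → Disjoint
        ((Finset.univ.filter fun b : F => b ≠ c i).image (fun b => Function.update c i b))
        ((Finset.univ.filter fun b : F => b ≠ c j).image (fun b => Function.update c j b)) := by
    intro i _ j _ hij
    rw [Finset.disjoint_left]
    rintro a ha ha'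
    simp only [Finset.mem_image, Finset.mem_filter, Finset.mem_univ, true_and] at ha ha'
    obtain ⟨b, hb, rfl⟩ := ha
    obtain ⟨b', hb', he⟩ := ha'
    have := congrFun he i
    rw [Function.update_of_ne hij, Function.update_self] at this
    exact hb this.symm
  rw [hset, Finset.card_biUnion hdisj]
  have hone : ∀ i : Fin q,
      ((Finset.univ.filter fun b : F => b ≠ c i).image (fun b => Function.update c i b)).card
      = q - 1 := by
    intro i
    rw [Finset.card_image_of_injective _ (fun b b' h => by
      have := congrFun h i; simpa using this)]
    rw [Finset.filter_ne', Finset.card_erase_of_mem (Finset.mem_univ _), Finset.card_univ, hcard]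
  simp [hone, Finset.sum_const]

lemma hd_add_left {n : ℕ} {F : Type} [Fintype F] [DecidableEq F] [Field F]
    (v a b : Fin n → F) : hammingDist (v + a) (v + b) = hammingDist a b := by
  unfold hammingDist
  congr 1
  ext i
  simp [add_right_inj]

lemma exists_nbr {q : ℕ} (hq : 3 ≤ q) {F : Type} [Field F] [Fintype F] [DecidableEq F]
    (hcard : Fintype.card F = q)
    {M : Submodule F (Fin q → F)}
    (hMcard : Nat.card M = q ^ (q - 1))
    (hMdist : ∀ x ∈ (M : Set (Fin q → F)), ∀ y ∈ (M : Set (Fin q → F)),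
      x ≠ y → 2 ≤ hammingDist x y)
    {C : Set (Fin q → F)} (hCM : C ⊆ (M : Set (Fin q → F)))
    (hCcard : C.ncard = q ^ (q - 2))
    (hCdist : ∀ a ∈ C, ∀ b ∈ C, a ≠ b → 3 ≤ hammingDist a b)
    {x : Fin q → F} (hx : x ∉ M) :
    ∃ c ∈ C, hammingDist x c = 1 := by
  classical
  set CF : Finset (Fin q → F) := (Set.toFinite C).toFinset with hCF
  have hCFmem : ∀ a, a ∈ CF ↔ a ∈ C := fun a => Set.Finite.mem_toFinset _
  have hCFcard : CF.card = q ^ (q - 2) := by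
    rw [← hCcard, Set.ncard_eq_toFinset_card C (Set.toFinite C)]
  set U : Finset (Fin q → F) :=
    CF.biUnion (fun c => Finset.univ.filter fun y => hammingDist c y = 1) with hU
  have hdisj : ∀ a ∈ CF, ∀ b ∈ CF, a ≠ b →
      Disjoint (Finset.univ.filter fun y => hammingDist a y = 1)
        (Finset.univ.filter fun y => hammingDist b y = 1) := by
    intro a ha b hb hab
    rw [Finset.disjoint_left]
    intro z hz hz'
    simp only [Finset.mem_filter, Finset.mem_univ, true_and] at hz hz'
    have h3 := hCdist a ((hCFmem a).mp ha) b ((hCFmem b).mp hb) hab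
    have ht := hammingDist_triangle a z b
    rw [hz, hammingDist_comm z b, hz'] at ht
    omega
  have hUcard : U.card = q ^ (q - 2) * (q * (q - 1)) := by
    rw [hU, Finset.card_biUnion hdisj]
    rw [Finset.sum_congr rfl (fun c _ => sphere_card hcard c), Finset.sum_const, hCFcard,
      smul_eq_mul]
  set Mc : Finset (Fin q → F) := Finset.univ.filter (fun y => y ∉ M) with hMcdef
  have hsub : U ⊆ Mc := by
    intro z hz
    simp only [hU, Finset.mem_biUnion, Finset.mem_filter, Finset.mem_univ, true_and] at hz
    simp only [hMcdef, Finset.mem_filter, Finset.mem_univ, true_and]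
    obtain ⟨c, hc, hd⟩ := hz
    intro hzM
    have hne : c ≠ z := fun e => by rw [e, hammingDist_self] at hd; omega
    have := hMdist c (hCM ((hCFmem c).mp hc)) z hzM hne
    omega
  have hV : Fintype.card (Fin q → F) = q ^ q := by
    rw [Fintype.card_fun, hcard, Fintype.card_fin]
  have hMF : (Finset.univ.filter (fun y : Fin q → F => y ∈ M)).card = q ^ (q - 1) := by
    rw [← hMcard, Nat.card_eq_fintype_card, Fintype.card_subtype]
  have hMc : Mc.card = q ^ q - q ^ (q - 1) := by
    have : Mc = Finset.univ \ (Finset.univ.filter (fun y : Fin q → F => y ∈ M)) := by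
      rw [hMcdef, Finset.filter_not]
    rw [this, Finset.card_sdiff_of_subset (Finset.filter_subset _ _), Finset.card_univ, hV, hMF]
  have e1 : q - 2 + 1 = q - 1 := by omega
  have e2 : q - 1 + 1 = q := by omega
  have h1 : q ^ (q - 1) = q ^ (q - 2) * q := by rw [← e1, pow_succ]
  have h2 : q ^ q = q ^ (q - 1) * q := by rw [← pow_succ, e2]
  have hqq : q * (q - 1) + q = q * q := by
    obtain ⟨n, rfl⟩ : ∃ n, q = n + 1 := ⟨q - 1, by omega⟩
    simp only [Nat.add_sub_cancel]
    ring
  have key : q ^ (q - 2) * (q * (q - 1)) + q ^ (q - 1) = q ^ q := by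
    rw [h2, h1, ← Nat.mul_add, hqq]; ring
  have hle : Mc.card ≤ U.card := by
    rw [hMc, hUcard, ← key, Nat.add_sub_cancel]
  have hUeq : U = Mc := Finset.eq_of_subset_of_card_le hsub hle
  have hxU : x ∈ U := by
    rw [hUeq]; simp [hMcdef, hx]
  simp only [hU, Finset.mem_biUnion, Finset.mem_filter, Finset.mem_univ, true_and] at hxU
  obtain ⟨c, hc, hd⟩ := hxU
  exact ⟨c, (hCFmem c).mp hc, by rw [hammingDist_comm]; exact hd⟩

/-- Over a finite field `F` with `q ≥ 3` elements, if `M` is a linear MDS code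
of length `q` with minimum distance 2, `C0 ⊂ M` is a linear MDS code of length `q` with
minimum distance 3, and `C1 = v + C0` for some `v ∈ M \ C0`, then `(C0, C1)` is a spherical
bitrade in `H(q,q)` of volume `q^(q-2)`. -/
theorem statement18 (q : ℕ) (hq : 3 ≤ q)
    (F : Type) [Field F] [Fintype F] [DecidableEq F] (hcard : Fintype.card F = q)
    (M C0 : Submodule F (Fin q → F))
    (hMmds : Nat.card M = q ^ (q - 1)) (hMdist : HasMinHDistF (M : Set (Fin q → F)) 2)
    (hC0mds : Nat.card C0 = q ^ (q - 2)) (hC0dist : HasMinHDistF (C0 : Set (Fin q → F)) 3)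
    (hC0M : C0 < M) (v : Fin q → F) (hvM : v ∈ M) (hvC0 : v ∉ C0) :
    IsSphericalBitrade (hammingGraphF q F)
      (C0 : Set (Fin q → F)) ((fun c => v + c) '' (C0 : Set (Fin q → F))) ∧
    (C0 : Set (Fin q → F)).ncard = q ^ (q - 2) := by
  classical
  have hC0card : (C0 : Set (Fin q → F)).ncard = q ^ (q - 2) := by
    rw [← Nat.card_coe_set_eq]; exact hC0mds
  set C1 : Set (Fin q → F) := (fun c => v + c) '' (C0 : Set (Fin q → F)) with hC1def
  have hC0M' : (C0 : Set (Fin q → F)) ⊆ (M : Set (Fin q → F)) := fun z hz => hC0M.le hz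
  have hC1M : C1 ⊆ (M : Set (Fin q → F)) := by
    rintro _ ⟨c, hc, rfl⟩
    exact M.add_mem hvM (hC0M.le hc)
  have hC1card : C1.ncard = q ^ (q - 2) := by
    rw [hC1def, Set.ncard_image_of_injective _ (add_right_injective v), hC0card]
  have hC1dist : ∀ a ∈ C1, ∀ b ∈ C1, a ≠ b → 3 ≤ hammingDist a b := by
    rintro _ ⟨a, ha, rfl⟩ _ ⟨b, hb, rfl⟩ hne
    rw [hd_add_left]
    exact hC0dist.1 a ha b hb (fun e => hne (by rw [e]))
  refine ⟨⟨?_, ⟨0, C0.zero_mem⟩, ⟨v + 0, 0, C0.zero_mem, rfl⟩, ?_⟩, hC0card⟩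
  · rw [Set.disjoint_left]
    rintro a ha ⟨c, hc, rfl⟩
    exact hvC0 (by have := C0.sub_mem ha hc; simpa using this)
  · intro x
    by_cases hx : x ∈ M
    · right
      rintro y hy hadjxy
      have hd : hammingDist x y = 1 := hadjxy
      have hyM : y ∈ (M : Set (Fin q → F)) := by
        rcases hy with hy | hy
        · exact hC0M' hy
        · exact hC1M hy
      have hne : x ≠ y := fun e => by rw [e, hammingDist_self] at hd; omega
      have := hMdist.1 x hx y hyM hne
      omega
    · left
      constructor
      · obtain ⟨c, hc, hd⟩ := exists_nbr hq hcard hMmds hMdist.1 hC0M' hC0card hC0dist.1 hx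
        refine ⟨c, ⟨hc, hd⟩, ?_⟩
        rintro y ⟨hy, hdy⟩
        by_contra hne
        have h3 := hC0dist.1 y hy c hc hne
        have ht := hammingDist_triangle y x c
        have hyx : hammingDist y x = 1 := by
          rw [hammingDist_comm]; exact hdy
        have hxc : hammingDist x c = 1 := hd
        omega
      · obtain ⟨c, hc, hd⟩ := exists_nbr hq hcard hMmds hMdist.1 hC1M hC1card hC1dist hx
        refine ⟨c, ⟨hc, hd⟩, ?_⟩
        rintro y ⟨hy, hdy⟩
        by_contra hne
        have h3 := hC1dist y hy c hc hne
        have ht := hammingDist_triangle y x c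
        have hyx : hammingDist y x = 1 := by
          rw [hammingDist_comm]; exact hdy
        have hxc : hammingDist x c = 1 := hd
        omega
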